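/- In the exterior algebra of ℂ⁶ set φ₁ := α∧γ∧ᾱ, φ₂ := α∧γ∧β̄, φ₃ := β∧γ∧ᾱ, φ₄ := β∧γ∧β̄ and (their formal conjugates) ψ₁ := ᾱ∧γ̄∧α, ψ₂ := ᾱ∧γ̄∧β, ψ₃ := β̄∧γ̄∧α, ψ₄ := β̄∧γ̄∧β. Then φ_j∧ψ_k = (i·G_{jk})·Ω for all 1 ≤ j,k ≤ 4, where G is the 4×4 matrix with rows (0,0,0,−1), (0,1,0,0), (0,0,1,0), (−1,0,0,0); moreover G is Hermitian and has exactly one negative eigenvalue and three positive eigenvalues. (G is the Gram matrix of the Hodge–Riemann form H(u,v) = −i∫_X u∧v̄ in the basis [α∧γ∧ᾱ], [α∧γ∧β̄], [β∧γ∧ᾱ], [β∧γ∧β̄] of H^{2,1}_[γ](X,ℂ), so H has signature (−,+,+,+) on H^{2,1}_[γ](X,ℂ), which is Corollary 5.3 of the paper.) -/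

import Mathlib

noncomputable section

/-- The exterior algebra of `ℂ⁶` in which all cohomology computations on the Iwasawa
manifold are carried out. -/
abbrev Λ6 : Type := ExteriorAlgebra ℂ (Fin 6 → ℂ)

/-- The degree-one generator corresponding to the `i`-th basis vector of `ℂ⁶`. -/
def gen (i : Fin 6) : Λ6 := ExteriorAlgebra.ι ℂ (Pi.single i (1 : ℂ))

/-- `α` -/ def α : Λ6 := gen 0
/-- `β` -/ def β : Λ6 := gen 1
/-- `γ` -/ def γ : Λ6 := gen 2
/-- `ᾱ` -/ def α' : Λ6 := gen 3
/-- `β̄` -/ def β' : Λ6 := gen 4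
/-- `γ̄` -/ def γ' : Λ6 := gen 5

/-- The normalized volume form `Ω = (i·α∧ᾱ)∧(i·β∧β̄)∧(i·γ∧γ̄)`. -/
def Ω : Λ6 := (Complex.I • (α * α')) * (Complex.I • (β * β')) * (Complex.I • (γ * γ'))

/-- The generators `φ₁, φ₂, φ₃, φ₄` of `H^{2,1}_[γ](X,ℂ)`. -/
def φv : Fin 4 → Λ6 := ![α * γ * α', α * γ * β', β * γ * α', β * γ * β']

/-- Their formal conjugates `ψ₁, ψ₂, ψ₃, ψ₄`. -/
def ψv : Fin 4 → Λ6 := ![α' * γ' * α, α' * γ' * β, β' * γ' * α, β' * γ' * β]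

/-- The Gram matrix `G` of the Hodge–Riemann form `H(u,v) = −i∫_X u∧v̄` on
`H^{2,1}_[γ](X,ℂ)`. -/
def Gm : Matrix (Fin 4) (Fin 4) ℂ := !![0, 0, 0, -1; 0, 1, 0, 0; 0, 0, 1, 0; -1, 0, 0, 0]


lemma gen_sq (i : Fin 6) : gen i * gen i = 0 := ExteriorAlgebra.ι_sq_zero _
lemma gen_sq' (i : Fin 6) (x : Λ6) : gen i * (gen i * x) = 0 := by
  rw [← mul_assoc, gen_sq, zero_mul]
lemma gen_swap (i j : Fin 6) : gen j * gen i = -(gen i * gen j) := by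
  have := ExteriorAlgebra.ι_add_mul_swap (R := ℂ)
    (Pi.single i (1:ℂ) : Fin 6 → ℂ) (Pi.single j (1:ℂ))
  unfold gen; exact eq_neg_of_add_eq_zero_right this
lemma gen_swap' (i j : Fin 6) (x : Λ6) : gen j * (gen i * x) = -(gen i * (gen j * x)) := by
  rw [← mul_assoc, gen_swap, ← mul_assoc, neg_mul]

lemma part1 : ∀ j k : Fin 4, φv j * ψv k = (Complex.I * Gm j k) • Ω := by
  intro j k
  fin_cases j <;> fin_cases k <;>
    simp only [φv, ψv, Gm, Ω, α, β, γ, α', β', γ', Fin.isValue, Matrix.cons_val_zero,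
      Matrix.cons_val_one, Matrix.head_cons, Matrix.cons_val', Matrix.head_fin_const,
      Matrix.cons_val_fin_one, Matrix.empty_val', Matrix.cons_val_two, Matrix.cons_val_three,
      Matrix.tail_cons, Matrix.cons_val_succ, Matrix.of_apply, Matrix.cons_val_zero', Matrix.cons_val_succ',
      smul_mul_assoc, mul_smul_comm, smul_smul, mul_assoc] <;>
    simp only [gen_swap 0 1, gen_swap 0 2, gen_swap 0 3, gen_swap 0 4, gen_swap 0 5,
      gen_swap 1 2, gen_swap 1 3, gen_swap 1 4, gen_swap 1 5, gen_swap 2 3, gen_swap 2 4,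
      gen_swap 2 5, gen_swap 3 4, gen_swap 3 5, gen_swap 4 5,
      gen_swap' 0 1, gen_swap' 0 2, gen_swap' 0 3, gen_swap' 0 4, gen_swap' 0 5,
      gen_swap' 1 2, gen_swap' 1 3, gen_swap' 1 4, gen_swap' 1 5, gen_swap' 2 3, gen_swap' 2 4,
      gen_swap' 2 5, gen_swap' 3 4, gen_swap' 3 5, gen_swap' 4 5,
      gen_sq, gen_sq', mul_neg, neg_neg, smul_neg, neg_smul, mul_zero, zero_mul, smul_zero,
      zero_smul, Complex.I_mul_I, neg_mul, one_mul, mul_one, one_smul, neg_inj, neg_zero]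


lemma Gm_herm : Gm.IsHermitian := by
  unfold Matrix.IsHermitian
  ext i j
  fin_cases i <;> fin_cases j <;>
    simp [Gm, Matrix.conjTranspose_apply, Matrix.vecHead, Matrix.vecTail]

lemma Gm_sq : Gm * Gm = 1 := by
  ext i j
  fin_cases i <;> fin_cases j <;>
    simp [Gm, Matrix.mul_apply, Fin.sum_univ_four, Matrix.one_apply,
      Matrix.vecHead, Matrix.vecTail]

lemma Gm_trace : Gm.trace = 2 := by
  simp [Gm, Matrix.trace, Fin.sum_univ_four, Matrix.diag, Matrix.vecHead, Matrix.vecTail]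
  norm_num

lemma eig_pm (hG : Gm.IsHermitian) (i : Fin 4) :
    hG.eigenvalues i = 1 ∨ hG.eigenvalues i = -1 := by
  have hv := hG.mulVec_eigenvectorBasis i
  have hv2 := congrArg Gm.mulVec hv
  rw [Matrix.mulVec_mulVec, Gm_sq, Matrix.one_mulVec, Matrix.mulVec_smul, hv, smul_smul] at hv2
  have hvne : (fun j => hG.eigenvectorBasis i j) ≠ (0 : Fin 4 → ℂ) := by
    have h0 := hG.eigenvectorBasis.orthonormal.ne_zero i
    intro h; apply h0
    ext j; exact congrFun h j
  obtain ⟨j, hj⟩ := Function.ne_iff.mp hvne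
  have hcoord := congrFun hv2 j
  simp only [Pi.smul_apply] at hcoord
  rw [Complex.real_smul] at hcoord
  have hj' : hG.eigenvectorBasis i j ≠ 0 := hj
  have h1 : ((hG.eigenvalues i * hG.eigenvalues i : ℝ) : ℂ) = 1 :=
    mul_right_cancel₀ hj' (by rw [one_mul]; exact hcoord.symm)
  have h2 : hG.eigenvalues i * hG.eigenvalues i = 1 := by exact_mod_cast h1
  exact mul_self_eq_one_iff.mp h2

lemma eig_sum (hG : Gm.IsHermitian) :
    hG.eigenvalues 0 + hG.eigenvalues 1 + hG.eigenvalues 2 + hG.eigenvalues 3 = 2 := by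
  have h := congrArg Matrix.trace hG.conjStarAlgAut_star_eigenvectorUnitary
  rw [Unitary.conjStarAlgAut_star_apply] at h
  rw [Matrix.trace_mul_cycle,
    (Matrix.mem_unitaryGroup_iff).mp (Matrix.IsHermitian.eigenvectorUnitary hG).2, one_mul,
    Gm_trace, Matrix.trace_diagonal, Fin.sum_univ_four] at h
  simp only [Function.comp] at h
  have h2 : ((hG.eigenvalues 0 + hG.eigenvalues 1 + hG.eigenvalues 2 + hG.eigenvalues 3 : ℝ) : ℂ)
      = (2:ℂ) := by push_cast; exact h.symm
  exact_mod_cast h2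

lemma part3 (hG : Gm.IsHermitian) : ∃ i₀ : Fin 4,
    hG.eigenvalues i₀ < 0 ∧ ∀ j : Fin 4, j ≠ i₀ → 0 < hG.eigenvalues j := by
  have hs := eig_sum hG
  rcases eig_pm hG 0 with h0|h0 <;> rcases eig_pm hG 1 with h1|h1 <;>
    rcases eig_pm hG 2 with h2|h2 <;> rcases eig_pm hG 3 with h3|h3 <;>
    rw [h0, h1, h2, h3] at hs <;>
    first
    | (exfalso; revert hs; norm_num; done)
    | (refine ⟨0, ?_, fun j hj => ?_⟩
       · rw [h0]; norm_num
       · fin_cases j <;> simp_all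
       done)
    | (refine ⟨1, ?_, fun j hj => ?_⟩
       · rw [h1]; norm_num
       · fin_cases j <;> simp_all
       done)
    | (refine ⟨2, ?_, fun j hj => ?_⟩
       · rw [h2]; norm_num
       · fin_cases j <;> simp_all
       done)
    | (refine ⟨3, ?_, fun j hj => ?_⟩
       · rw [h3]; norm_num
       · fin_cases j <;> simp_all
       done)

/-- `φ_j∧ψ_k = i·G_{jk}·Ω`, `G` is Hermitian with exactly one negative and three positive
eigenvalues: `H` has signature `(−,+,+,+)` on `H^{2,1}_[γ](X,ℂ)` (Corollary 5.3). -/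
theorem hodge_riemann_form_signature_on_H21_gamma :
    (∀ j k : Fin 4, φv j * ψv k = (Complex.I * Gm j k) • Ω) ∧
    Gm.IsHermitian ∧
    (∀ hG : Gm.IsHermitian, ∃ i₀ : Fin 4,
      hG.eigenvalues i₀ < 0 ∧ ∀ j : Fin 4, j ≠ i₀ → 0 < hG.eigenvalues j) :=
  ⟨part1, Gm_herm, part3⟩
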